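/- Let Ψ(x,z) = e^{xz} · [[z − x⁻¹, x⁻²],[0, z − x⁻¹]]. Then (∂_z³Ψ) − 3(∂_z²Ψ)·(1/z)·I + 3(∂_zΨ)·(1/z²)·I + 3Ψ·[[0, z⁻²],[0, 0]] = x³·Ψ for all x ≠ 0 and z ≠ 0. -/

import Mathlib

open Matrix

noncomputable def Psi (x z : ℂ) : Matrix (Fin 2) (Fin 2) ℂ :=
  Complex.exp (x * z) • !![z - x⁻¹, (x ^ 2)⁻¹; 0, z - x⁻¹]

lemma dlin (x a b : ℂ) :
    deriv (fun w => Complex.exp (x * w) * (a * w + b))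
      = fun w => Complex.exp (x * w) * ((x * a) * w + (x * b + a)) := by
  funext w
  have h1 : HasDerivAt (fun w : ℂ => Complex.exp (x * w)) (Complex.exp (x * w) * x) w := by
    simpa using (((hasDerivAt_id w).const_mul x).cexp)
  have h2 : HasDerivAt (fun w : ℂ => a * w + b) a w := by
    simpa using ((hasDerivAt_id w).const_mul a).add_const b
  rw [show (fun w => Complex.exp (x * w) * (a * w + b)) = (fun w => Complex.exp (x * w)) * (fun w => a * w + b) from rfl, (h1.mul h2).deriv]
  ring

lemma D1v (x a b z : ℂ) :
    deriv (fun w => Complex.exp (x * w) * (a * w + b)) z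
      = Complex.exp (x * z) * ((x * a) * z + (x * b + a)) := by
  rw [dlin]

lemma D2v (x a b z : ℂ) :
    iteratedDeriv 2 (fun w => Complex.exp (x * w) * (a * w + b)) z
      = Complex.exp (x * z) * ((x * (x * a)) * z + (x * (x * b + a) + x * a)) := by
  rw [show (2 : ℕ) = 1 + 1 from rfl, iteratedDeriv_succ, iteratedDeriv_one, dlin, dlin]

lemma D3v (x a b z : ℂ) :
    iteratedDeriv 3 (fun w => Complex.exp (x * w) * (a * w + b)) z
      = Complex.exp (x * z) *
          ((x * (x * (x * a))) * z + (x * (x * (x * b + a) + x * a) + x * (x * a))) := by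
  rw [show (3 : ℕ) = 1 + 1 + 1 from rfl, iteratedDeriv_succ, iteratedDeriv_succ,
    iteratedDeriv_one, dlin, dlin, dlin]

set_option maxHeartbeats 1600000 in
theorem stmt1 (x z : ℂ) (hx : x ≠ 0) (hz : z ≠ 0) :
    (Matrix.of fun i j => iteratedDeriv 3 (fun w => Psi x w i j) z)
      - (3 / z) • (Matrix.of fun i j => iteratedDeriv 2 (fun w => Psi x w i j) z)
      + (3 / z ^ 2) • (Matrix.of fun i j => deriv (fun w => Psi x w i j) z)
      + Psi x z * ((3 : ℂ) • !![0, (z ^ 2)⁻¹; 0, 0])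
      = (x ^ 3) • Psi x z := by
  have hd : deriv (fun w : ℂ => Complex.exp (x * w)) z = Complex.exp (x * z) * x := by
    simpa using (((hasDerivAt_id z).const_mul x).cexp).deriv
  ext i j
  fin_cases i <;> fin_cases j <;>
    simp [Psi, Matrix.mul_apply, Fin.sum_univ_two]
  · have e : (fun w : ℂ => Complex.exp (x * w) * (w - x⁻¹))
        = fun w => Complex.exp (x * w) * (1 * w + (-x⁻¹)) := by funext w; ring
    rw [e, D3v, D2v, D1v]
    field_simp
    ring
  · have e : (fun w : ℂ => Complex.exp (x * w) * (x ^ 2)⁻¹)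
        = fun w => Complex.exp (x * w) * (0 * w + (x ^ 2)⁻¹) := by funext w; ring
    rw [hd]
    field_simp
    ring_nf
  · have e : (fun w : ℂ => Complex.exp (x * w) * (w - x⁻¹))
        = fun w => Complex.exp (x * w) * (1 * w + (-x⁻¹)) := by funext w; ring
    rw [e, D3v, D2v, D1v]
    field_simp
    ring
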